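/- Let ω₁, ω₂ : [0,t₀) → [0,∞) be continuous, strictly increasing functions with ω₁(0) = ω₂(0) = 0. Then for every a, c > 0 and b ∈ (0,t₀), there exists t̃₀ ∈ (0,b) such that the function ω̃(t) := t·(a + ∫_t^b ω₁(s)/s ds)·exp(c·∫_t^b ω₂(s)/s ds) is continuous, strictly increasing on (0,t̃₀), and satisfies lim_{t→0⁺} ω̃(t) = 0. -/

import Mathlib

open MeasureTheory Set Filter
open Topology

/-- If `ω₁, ω₂` are moduli of continuity on `[0,t₀)`, then for every `a, c > 0` and
`b ∈ (0,t₀)` there exists `tbar₀ ∈ (0,b)` such that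
`ω̃(t) = t (a + ∫_t^b ω₁(s)/s ds) exp(c ∫_t^b ω₂(s)/s ds)` is continuous, strictly
increasing on `(0,tbar₀)`, and tends to `0` as `t → 0⁺`. -/
theorem modulus_exp_monotonicity (t₀ : ℝ) (ω₁ ω₂ : ℝ → ℝ)
    (h₁c : ContinuousOn ω₁ (Set.Ico 0 t₀)) (h₂c : ContinuousOn ω₂ (Set.Ico 0 t₀))
    (h₁m : StrictMonoOn ω₁ (Set.Ico 0 t₀)) (h₂m : StrictMonoOn ω₂ (Set.Ico 0 t₀))
    (h₁0 : ω₁ 0 = 0) (h₂0 : ω₂ 0 = 0)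
    (h₁nn : ∀ t ∈ Set.Ico (0:ℝ) t₀, 0 ≤ ω₁ t) (h₂nn : ∀ t ∈ Set.Ico (0:ℝ) t₀, 0 ≤ ω₂ t)
    (a c b : ℝ) (ha : 0 < a) (hc : 0 < c) (hb : b ∈ Set.Ioo 0 t₀) :
    ∃ tbar ∈ Set.Ioo 0 b,
      ContinuousOn
        (fun t => t * (a + ∫ s in t..b, ω₁ s / s) * Real.exp (c * ∫ s in t..b, ω₂ s / s))
        (Set.Ioo 0 tbar) ∧
      StrictMonoOn
        (fun t => t * (a + ∫ s in t..b, ω₁ s / s) * Real.exp (c * ∫ s in t..b, ω₂ s / s))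
        (Set.Ioo 0 tbar) ∧
      Filter.Tendsto
        (fun t => t * (a + ∫ s in t..b, ω₁ s / s) * Real.exp (c * ∫ s in t..b, ω₂ s / s))
        (nhdsWithin 0 (Set.Ioi 0)) (nhds 0) := by
  obtain ⟨hb0, hbt⟩ := hb
  have h0t : (0:ℝ) < t₀ := hb0.trans hbt
  -- continuity of integrands on Ioo 0 t₀
  have hg₁c : ContinuousOn (fun s => ω₁ s / s) (Set.Ioo 0 t₀) :=
    (h₁c.mono Set.Ioo_subset_Ico_self).div continuousOn_id (fun x hx => ne_of_gt hx.1)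
  have hg₂c : ContinuousOn (fun s => ω₂ s / s) (Set.Ioo 0 t₀) :=
    (h₂c.mono Set.Ioo_subset_Ico_self).div continuousOn_id (fun x hx => ne_of_gt hx.1)
  -- interval integrability helper
  have hint : ∀ g : ℝ → ℝ, ContinuousOn g (Set.Ioo 0 t₀) → ∀ x y : ℝ, 0 < x → x ≤ y → y < t₀ →
      IntervalIntegrable g volume x y := by
    intro g hg x y hx hxy hy
    apply (hg.mono ?_).intervalIntegrable
    rw [Set.uIcc_of_le hxy]
    exact fun s hs => ⟨lt_of_lt_of_le hx hs.1, lt_of_le_of_lt hs.2 hy⟩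
  -- derivative of the primitive
  have hD : ∀ g : ℝ → ℝ, ContinuousOn g (Set.Ioo 0 t₀) → ∀ t : ℝ, 0 < t → t < b →
      HasDerivAt (fun u => ∫ s in u..b, g s) (-(g t)) t := by
    intro g hg t ht htb
    have htmem : t ∈ Set.Ioo (0:ℝ) t₀ := ⟨ht, htb.trans hbt⟩
    exact intervalIntegral.integral_hasDerivAt_left
      (hint g hg t b ht htb.le hbt)
      (hg.stronglyMeasurableAtFilter isOpen_Ioo t htmem)
      (hg.continuousAt (isOpen_Ioo.mem_nhds htmem))
  -- choose δ where ω₁ < a/2 and c·ω₂ < 1/2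
  have hsm : ∀ ω : ℝ → ℝ, ContinuousOn ω (Set.Ico 0 t₀) → ω 0 = 0 → ∀ ε : ℝ, 0 < ε →
      ∃ u : ℝ, 0 < u ∧ ∀ s : ℝ, 0 ≤ s → s ≤ u → ω s < ε := by
    intro ω hω h0 ε hε
    have h := hω 0 ⟨le_refl 0, h0t⟩
    rw [ContinuousWithinAt, h0, nhdsWithin_Ico_eq_nhdsGE h0t] at h
    have hev : {s : ℝ | ω s < ε} ∈ 𝓝[≥] (0:ℝ) := h (Iio_mem_nhds hε)
    obtain ⟨u, hu, hsub⟩ := mem_nhdsGE_iff_exists_Icc_subset.1 hev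
    exact ⟨u, hu, fun s hs hsu => hsub ⟨hs, hsu⟩⟩
  obtain ⟨u₁, hu₁, hω₁u⟩ := hsm ω₁ h₁c h₁0 (a/2) (by linarith)
  obtain ⟨u₂, hu₂, hω₂u⟩ := hsm ω₂ h₂c h₂0 (1/(2*c)) (by positivity)
  set δ : ℝ := min (min u₁ u₂) b / 2 with hδdef
  have hδ0 : 0 < δ := by positivity
  have hδb : δ < b := by
    have h1 : min (min u₁ u₂) b ≤ b := min_le_right _ _
    rw [hδdef]; nlinarith
  have hδu₁ : δ ≤ u₁ := by
    have h1 : min (min u₁ u₂) b ≤ u₁ := le_trans (min_le_left _ _) (min_le_left _ _)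
    nlinarith
  have hδu₂ : δ ≤ u₂ := by
    have h1 : min (min u₁ u₂) b ≤ u₂ := le_trans (min_le_left _ _) (min_le_right _ _)
    nlinarith
  have hω₁δ : ∀ s : ℝ, 0 ≤ s → s ≤ δ → ω₁ s < a/2 := fun s hs h => hω₁u s hs (h.trans hδu₁)
  have hω₂δ : ∀ s : ℝ, 0 ≤ s → s ≤ δ → ω₂ s < 1/(2*c) := fun s hs h => hω₂u s hs (h.trans hδu₂)
  -- derivative of F
  have hF : ∀ t : ℝ, 0 < t → t < b →
      HasDerivAt (fun u => u * (a + ∫ s in u..b, ω₁ s / s) * Real.exp (c * ∫ s in u..b, ω₂ s / s))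
        (Real.exp (c * ∫ s in t..b, ω₂ s / s) *
          ((a + ∫ s in t..b, ω₁ s / s) * (1 - c * ω₂ t) - ω₁ t)) t := by
    intro t ht htb
    have d1 := hD _ hg₁c t ht htb
    have d2 := hD _ hg₂c t ht htb
    have du : HasDerivAt (fun u => u * (a + ∫ s in u..b, ω₁ s / s))
        (1 * (a + ∫ s in t..b, ω₁ s / s) + t * (0 + -(ω₁ t / t))) t :=
      (hasDerivAt_id t).mul ((hasDerivAt_const t a).add d1)
    have dv : HasDerivAt (fun u => Real.exp (c * ∫ s in u..b, ω₂ s / s))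
        (Real.exp (c * ∫ s in t..b, ω₂ s / s) * (c * -(ω₂ t / t))) t :=
      (Real.hasDerivAt_exp _).comp t (d2.const_mul c)
    have hcomb := du.mul dv
    refine hcomb.congr_deriv ?_
    have htne : t ≠ 0 := ne_of_gt ht
    have e1 : t * (ω₁ t / t) = ω₁ t := mul_div_cancel₀ _ htne
    have e2 : t * (ω₂ t / t) = ω₂ t := mul_div_cancel₀ _ htne
    set I1 : ℝ := ∫ s in t..b, ω₁ s / s
    set I2 : ℝ := ∫ s in t..b, ω₂ s / s
    linear_combination -e1 * Real.exp (c * I2) - e2 * ((a + I1) * Real.exp (c * I2) * c)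
  -- nonnegativity of the ω₁ integral
  have hI₁nn : ∀ t : ℝ, 0 < t → t ≤ b → 0 ≤ ∫ s in t..b, ω₁ s / s := by
    intro t ht htb
    apply intervalIntegral.integral_nonneg htb
    intro s hs
    exact div_nonneg (h₁nn s ⟨le_trans ht.le hs.1, lt_of_le_of_lt hs.2 hbt⟩)
      (le_trans ht.le hs.1)
  -- positivity of the derivative on (0, δ)
  have hDpos : ∀ t : ℝ, t ∈ Set.Ioo 0 δ →
      0 < Real.exp (c * ∫ s in t..b, ω₂ s / s) *
          ((a + ∫ s in t..b, ω₁ s / s) * (1 - c * ω₂ t) - ω₁ t) := by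
    intro t ⟨ht, htδ⟩
    have htb : t < b := htδ.trans hδb
    have h1 : ω₁ t < a/2 := hω₁δ t ht.le htδ.le
    have h2 : ω₂ t < 1/(2*c) := hω₂δ t ht.le htδ.le
    have h2' : c * ω₂ t < 1/2 := by
      calc c * ω₂ t < c * (1/(2*c)) := mul_lt_mul_of_pos_left h2 hc
        _ = 1/2 := by field_simp
    have hInn := hI₁nn t ht htb.le
    apply mul_pos (Real.exp_pos _)
    nlinarith [mul_nonneg hInn (by linarith : (0:ℝ) ≤ 1 - c * ω₂ t)]
  refine ⟨δ, ⟨hδ0, hδb⟩, ?_, ?_, ?_⟩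
  · intro x hx
    exact ((hF x hx.1 (hx.2.trans hδb)).continuousAt).continuousWithinAt
  · apply strictMonoOn_of_deriv_pos (convex_Ioo 0 δ)
    · intro x hx
      exact ((hF x hx.1 (hx.2.trans hδb)).continuousAt).continuousWithinAt
    · intro x hx
      rw [interior_Ioo] at hx
      rw [(hF x hx.1 (hx.2.trans hδb)).deriv]
      exact hDpos x hx
  · set C₁ : ℝ := ∫ s in δ..b, ω₁ s / s with hC₁
    set C₂ : ℝ := ∫ s in δ..b, ω₂ s / s with hC₂
    set E₀ : ℝ := Real.exp (c * C₂ + (1/2) * Real.log δ) with hE₀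
    set G : ℝ → ℝ := fun t => E₀ * (a + C₁ + (a/2) * Real.log δ) * t ^ ((1/2):ℝ)
        - E₀ * (a/2) * (Real.log t * t ^ ((1/2):ℝ)) with hG
    have t1 : Tendsto (fun t : ℝ => t ^ ((1/2):ℝ)) (𝓝[>] (0:ℝ)) (𝓝 0) := by
      have h := Real.continuousAt_rpow_const 0 (1/2) (Or.inr (by norm_num))
      have h2 : (0:ℝ) ^ ((1/2):ℝ) = 0 := Real.zero_rpow (by norm_num)
      exact (h2 ▸ h.tendsto).mono_left nhdsWithin_le_nhds
    have t2 : Tendsto (fun t : ℝ => Real.log t * t ^ ((1/2):ℝ)) (𝓝[>] (0:ℝ)) (𝓝 0) :=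
      tendsto_log_mul_rpow_nhdsGT_zero (by norm_num)
    have tG : Tendsto G (𝓝[>] (0:ℝ)) (𝓝 0) := by
      rw [hG]
      have h := (t1.const_mul (E₀ * (a + C₁ + (a/2) * Real.log δ))).sub
        (t2.const_mul (E₀ * (a/2)))
      simpa using h
    have hmem : Set.Ioo (0:ℝ) δ ∈ 𝓝[>] (0:ℝ) := Ioo_mem_nhdsGT_of_mem ⟨le_refl 0, hδ0⟩
    apply tendsto_of_tendsto_of_tendsto_of_le_of_le' tendsto_const_nhds tG
    · filter_upwards [hmem] with t ht
      obtain ⟨ht0, htδ⟩ := ht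
      have h1 : 0 ≤ ∫ s in t..b, ω₁ s / s := hI₁nn t ht0 (htδ.trans hδb).le
      exact mul_nonneg (mul_nonneg ht0.le (by linarith)) (Real.exp_pos _).le
    · filter_upwards [hmem] with t ht
      obtain ⟨ht0, htδ⟩ := ht
      have htb : t < b := htδ.trans hδb
      have hδt₀ : δ < t₀ := hδb.trans hbt
      have hi1a : IntervalIntegrable (fun s => ω₁ s / s) volume t δ :=
        hint _ hg₁c t δ ht0 htδ.le hδt₀
      have hi1b : IntervalIntegrable (fun s => ω₁ s / s) volume δ b :=
        hint _ hg₁c δ b hδ0 hδb.le hbt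
      have hi2a : IntervalIntegrable (fun s => ω₂ s / s) volume t δ :=
        hint _ hg₂c t δ ht0 htδ.le hδt₀
      have hi2b : IntervalIntegrable (fun s => ω₂ s / s) volume δ b :=
        hint _ hg₂c δ b hδ0 hδb.le hbt
      have hcont1 : ContinuousOn (fun s : ℝ => (a/2) * (1/s)) (Set.Ioo 0 t₀) :=
        continuousOn_const.mul (continuousOn_const.div continuousOn_id fun x hx => ne_of_gt hx.1)
      have hcont2 : ContinuousOn (fun s : ℝ => (1/(2*c)) * (1/s)) (Set.Ioo 0 t₀) :=
        continuousOn_const.mul (continuousOn_const.div continuousOn_id fun x hx => ne_of_gt hx.1)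
      have hint1 : IntervalIntegrable (fun s : ℝ => (a/2) * (1/s)) volume t δ :=
        hint _ hcont1 t δ ht0 htδ.le hδt₀
      have hint2 : IntervalIntegrable (fun s : ℝ => (1/(2*c)) * (1/s)) volume t δ :=
        hint _ hcont2 t δ ht0 htδ.le hδt₀
      have h0notin : (0:ℝ) ∉ Set.uIcc t δ := by
        rw [Set.uIcc_of_le htδ.le]
        exact fun h => absurd h.1 (not_le.2 ht0)
      have hsplit1 : (∫ s in t..b, ω₁ s / s) = (∫ s in t..δ, ω₁ s / s) + C₁ :=
        (intervalIntegral.integral_add_adjacent_intervals hi1a hi1b).symm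
      have hsplit2 : (∫ s in t..b, ω₂ s / s) = (∫ s in t..δ, ω₂ s / s) + C₂ :=
        (intervalIntegral.integral_add_adjacent_intervals hi2a hi2b).symm
      have hb1 : (∫ s in t..δ, ω₁ s / s) ≤ (a/2) * Real.log (δ/t) := by
        have hmono : (∫ s in t..δ, ω₁ s / s) ≤ ∫ s in t..δ, (a/2) * (1/s) := by
          apply intervalIntegral.integral_mono_on htδ.le hi1a hint1
          intro s hs
          have hs0 : 0 < s := lt_of_lt_of_le ht0 hs.1
          rw [mul_one_div]
          gcongr
          exact (hω₁δ s hs0.le hs.2).le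
        rwa [intervalIntegral.integral_const_mul, integral_one_div h0notin] at hmono
      have hb2 : (∫ s in t..δ, ω₂ s / s) ≤ (1/(2*c)) * Real.log (δ/t) := by
        have hmono : (∫ s in t..δ, ω₂ s / s) ≤ ∫ s in t..δ, (1/(2*c)) * (1/s) := by
          apply intervalIntegral.integral_mono_on htδ.le hi2a hint2
          intro s hs
          have hs0 : 0 < s := lt_of_lt_of_le ht0 hs.1
          rw [mul_one_div]
          gcongr
          exact (hω₂δ s hs0.le hs.2).le
        rwa [intervalIntegral.integral_const_mul, integral_one_div h0notin] at hmono
      have hI1le : (∫ s in t..b, ω₁ s / s) ≤ (a/2) * Real.log (δ/t) + C₁ := by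
        rw [hsplit1]; linarith
      have hI2le : c * (∫ s in t..b, ω₂ s / s) ≤ (1/2) * Real.log (δ/t) + c * C₂ := by
        rw [hsplit2]
        calc c * ((∫ s in t..δ, ω₂ s / s) + C₂)
            ≤ c * ((1/(2*c)) * Real.log (δ/t) + C₂) :=
              mul_le_mul_of_nonneg_left (by linarith) hc.le
          _ = (1/2) * Real.log (δ/t) + c * C₂ := by field_simp
      have h1 : 0 ≤ ∫ s in t..b, ω₁ s / s := hI₁nn t ht0 htb.le
      have step1 : t * (a + ∫ s in t..b, ω₁ s / s) * Real.exp (c * ∫ s in t..b, ω₂ s / s)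
          ≤ t * (a + ((a/2) * Real.log (δ/t) + C₁)) *
            Real.exp ((1/2) * Real.log (δ/t) + c * C₂) := by
        have hLnn : 0 ≤ Real.log (δ/t) := Real.log_nonneg ((one_le_div ht0).2 htδ.le)
        have hC1nn : 0 ≤ C₁ := hI₁nn δ hδ0 hδb.le
        have hprod : 0 ≤ a/2 * Real.log (δ/t) := mul_nonneg (by linarith) hLnn
        gcongr
      have step2 : t * (a + ((a/2) * Real.log (δ/t) + C₁)) *
          Real.exp ((1/2) * Real.log (δ/t) + c * C₂) = G t := by
        rw [Real.log_div hδ0.ne' ht0.ne']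
        have hexp : Real.exp ((1/2) * (Real.log δ - Real.log t) + c * C₂)
            = E₀ * t ^ (-(1/2) : ℝ) := by
          rw [Real.rpow_def_of_pos ht0, hE₀, ← Real.exp_add]
          congr 1
          ring
        have htt : t * t ^ (-(1/2) : ℝ) = t ^ ((1/2) : ℝ) := by
          nth_rewrite 1 [← Real.rpow_one t]
          rw [← Real.rpow_add ht0]
          norm_num
        rw [hexp, hG]
        calc t * (a + ((a/2) * (Real.log δ - Real.log t) + C₁)) * (E₀ * t ^ (-(1/2):ℝ))
            = (a + ((a/2) * (Real.log δ - Real.log t) + C₁)) * E₀ * (t * t ^ (-(1/2):ℝ)) := by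
              ring
          _ = _ := by rw [htt]; ring
      exact step1.trans step2.le
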